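/- For all real numbers s, r, t with 0 ≤ r ≤ r + s ≤ t, we have -1 ≤ log⁺(r+s) − ((t−(r+s))/(t−r) · log⁺ r + s/(t−r) · log⁺ t) ≤ 1 + log⁺(min(s, t−r−s)), where log⁺ x := log(max(x,1)). -/
import Mathlib
open Real

/-- `log⁺ x = log (max x 1)`. -/
noncomputable def logPlus (x : ℝ) : ℝ := Real.log (max x 1)

lemma logPlus_nonneg (x : ℝ) : 0 ≤ logPlus x := Real.log_nonneg (le_max_right _ _)

lemma logPlus_mono {x y : ℝ} (h : x ≤ y) : logPlus x ≤ logPlus y :=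
  Real.log_le_log (lt_of_lt_of_le one_pos (le_max_right x 1)) (max_le_max h le_rfl)

lemma logPlus_add_le {a b : ℝ} (ha : 0 ≤ a) (hb : 0 ≤ b) :
    logPlus (a + b) ≤ Real.log 2 + logPlus a + logPlus b := by
  have hx : (1:ℝ) ≤ max a 1 := le_max_right _ _
  have hy : (1:ℝ) ≤ max b 1 := le_max_right _ _
  have h1 : max (a+b) 1 ≤ 2 * (max a 1 * max b 1) := by
    have h2 : a + b ≤ max a 1 + max b 1 := add_le_add (le_max_left _ _) (le_max_left _ _)
    have := mul_le_mul hx hy (by linarith) (by linarith : (0:ℝ) ≤ max a 1)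
    rcases max_cases (a+b) 1 with ⟨h,_⟩ | ⟨h,_⟩ <;> rw [h] <;> nlinarith
  calc logPlus (a+b) ≤ Real.log (2 * (max a 1 * max b 1)) :=
        Real.log_le_log (lt_of_lt_of_le one_pos (le_max_right _ _)) h1
    _ = Real.log 2 + logPlus a + logPlus b := by
        rw [Real.log_mul (by norm_num) (by positivity), Real.log_mul (by positivity) (by positivity)]
        ring_nf; rfl

lemma scalar_ineq {v w : ℝ} (hv : 0 ≤ v) (hvw : v ≤ w) (hw : 0 < w) :
    v / w * (1 + logPlus w) ≤ 1 + logPlus v := by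
  rcases le_or_gt w 1 with hw1 | hw1
  · have : logPlus w = 0 := by
      unfold logPlus; rw [max_eq_right hw1, Real.log_one]
    rw [this]
    have : v / w ≤ 1 := (div_le_one hw).mpr hvw
    have := logPlus_nonneg v
    linarith
  · have hLw : logPlus w = Real.log w := by unfold logPlus; rw [max_eq_left hw1.le]
    rcases le_or_gt v 1 with hv1 | hv1
    · have hLv : logPlus v = 0 := by unfold logPlus; rw [max_eq_right hv1, Real.log_one]
      rw [hLw, hLv]
      have h1 : Real.log w ≤ w - 1 := Real.log_le_sub_one_of_pos hw
      have h2 : v / w * (1 + Real.log w) ≤ 1 / w * (1 + Real.log w) := by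
        have hlog : 0 ≤ Real.log w := Real.log_nonneg hw1.le
        apply mul_le_mul_of_nonneg_right _ (by linarith)
        gcongr
      have h3 : 1 / w * (1 + Real.log w) ≤ 1 := by
        rw [div_mul_eq_mul_div, one_mul, div_le_one hw]; linarith
      linarith
    · have hLv : logPlus v = Real.log v := by unfold logPlus; rw [max_eq_left hv1.le]
      rw [hLw, hLv]
      have hv0 : 0 < v := lt_trans one_pos hv1
      have hlogv : 0 ≤ Real.log v := Real.log_nonneg hv1.le
      have hc : Real.log (w / v) ≤ w / v - 1 := Real.log_le_sub_one_of_pos (by positivity)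
      rw [Real.log_div (ne_of_gt hw) (ne_of_gt hv0)] at hc
      -- log w - log v ≤ w/v - 1, so v*log w ≤ v*log v + w - v
      have h4 : v * Real.log w ≤ v * Real.log v + w - v := by
        have := mul_le_mul_of_nonneg_left hc hv0.le
        rw [mul_sub] at this
        have : v * (w / v - 1) = w - v := by field_simp
        nlinarith [mul_le_mul_of_nonneg_left hc hv0.le]
      rw [div_mul_eq_mul_div, div_le_iff₀ hw]
      nlinarith

/-- Deterministic concavity-type estimate comparing `log⁺` at an intermediate point `r+s`
with the linear interpolation between `log⁺ r` and `log⁺ t` over `[r, t]`. -/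
theorem stmt_0 (s r t : ℝ) (hr : 0 ≤ r) (hs : r ≤ r + s) (ht : r + s ≤ t) (hrt : r < t) :
    -1 ≤ logPlus (r + s) -
        ((t - (r + s)) / (t - r) * logPlus r + s / (t - r) * logPlus t) ∧
    logPlus (r + s) -
        ((t - (r + s)) / (t - r) * logPlus r + s / (t - r) * logPlus t)
      ≤ 1 + logPlus (min s (t - r - s)) := by
  have hs' : 0 ≤ s := by linarith
  have hw : 0 < t - r := sub_pos.mpr hrt
  have hv : 0 ≤ t - r - s := by linarith
  set lam := s / (t - r) with hlam
  have hl0 : 0 ≤ lam := div_nonneg hs' hw.le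
  have hl1 : lam ≤ 1 := (div_le_one hw).mpr (by linarith)
  have hlamt : lam * (t - r) = s := div_mul_cancel₀ s hw.ne'
  have hmu : (t - (r + s)) / (t - r) = 1 - lam := by
    show (t - (r + s)) / (t - r) = 1 - s / (t - r)
    field_simp
    ring
  have hlog2 : Real.log 2 ≤ 1 := by
    have := Real.log_le_sub_one_of_pos (by norm_num : (0:ℝ) < 2); linarith
  rw [hmu]
  constructor
  · -- lower bound
    set X := max r 1 with hX
    set Y := max t 1 with hY
    set M := max (r + s) 1 with hM
    have hX1 : (1:ℝ) ≤ X := le_max_right _ _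
    have hY1 : (1:ℝ) ≤ Y := le_max_right _ _
    have hM1 : (1:ℝ) ≤ M := le_max_right _ _
    have hXr : X ≤ r + 1 := max_le (by linarith) (by linarith)
    have hYt : Y ≤ t + 1 := max_le (by linarith) (by linarith)
    have hMm : r + s ≤ M := le_max_left _ _
    have h1 : (1 - lam) * X + lam * Y ≤ 2 * M := by
      nlinarith [mul_le_mul_of_nonneg_left hXr (by linarith : (0:ℝ) ≤ 1 - lam),
        mul_le_mul_of_nonneg_left hYt hl0]
    have hpos : 0 < (1 - lam) * X + lam * Y := by nlinarith
    have hconc := (strictConcaveOn_log_Ioi.concaveOn).2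
      (Set.mem_Ioi.mpr (lt_of_lt_of_le one_pos hX1))
      (Set.mem_Ioi.mpr (lt_of_lt_of_le one_pos hY1))
      (by linarith : (0:ℝ) ≤ 1 - lam) hl0 (by ring)
    simp only [smul_eq_mul] at hconc
    have h2 : Real.log ((1 - lam) * X + lam * Y) ≤ Real.log (2 * M) :=
      Real.log_le_log hpos h1
    have h3 : Real.log (2 * M) = Real.log 2 + Real.log M :=
      Real.log_mul (by norm_num) (by positivity)
    have : (1 - lam) * logPlus r + lam * logPlus t ≤ Real.log 2 + logPlus (r + s) := by
      unfold logPlus; rw [← hX, ← hY, ← hM]; linarith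
    linarith
  · -- upper bound
    rcases le_total s (t - r - s) with hcase | hcase
    · rw [min_eq_left hcase]
      have hsub := logPlus_add_le hr hs'
      have hLrt : logPlus r ≤ logPlus t := logPlus_mono (by linarith)
      nlinarith [mul_nonneg hl0 (sub_nonneg.mpr hLrt)]
    · rw [min_eq_right hcase]
      have hmt : logPlus (r + s) ≤ logPlus t := logPlus_mono ht
      have hsub : logPlus t ≤ Real.log 2 + logPlus r + logPlus (t - r) := by
        have := logPlus_add_le hr hw.le
        rwa [show r + (t - r) = t by ring] at this
      have hkey : (1 - lam) * (logPlus t - logPlus r) ≤ (1 - lam) * (1 + logPlus (t - r)) :=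
        mul_le_mul_of_nonneg_left (by linarith) (by linarith)
      have hsc : (t - r - s) / (t - r) * (1 + logPlus (t - r)) ≤ 1 + logPlus (t - r - s) :=
        scalar_ineq hv (by linarith) hw
      have heq : (1 - lam) * (1 + logPlus (t - r)) = (t - r - s) / (t - r) * (1 + logPlus (t - r)) := by
        show (1 - s / (t - r)) * _ = _
        congr 1
        field_simp
      rw [heq] at hkey
      nlinarith [hmt, hkey, hsc]
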